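/- arXiv:2208.03202 — 5 statements merged into one kernel-verified Lean document; each statement's English description precedes it below -/
import Mathlib

section
/- A partial injection α on {1,...,n} with domain {d₁ < d₂ < ... < d_p} and values m_k = α(d_k) is order-preserving, fence-preserving (with respect to the zig-zag order where i ≺ i+1 for odd i and i ≻ i+1 for even i), parity-preserving, and has fence-preserving inverse, if and only if the following four conditions hold: (i) m₁ < m₂ < ... < m_p; (ii) d₁ and m₁ have the same parity; (iii) for all k ∈ {1,...,p−1}, d_{k+1} − d_k = 1 if and only if m_{k+1} − m_k = 1; (iv) for all k ∈ {1,...,p−1}, d_{k+1} − d_k is even if and only if m_{k+1} − m_k is even. -/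
/-- A partial injection on `{1,...,n}`, represented by its graph. -/
structure PInj (n : ℕ) where
  R : ℕ → ℕ → Prop
  memL : ∀ ⦃x y⦄, R x y → x ∈ Set.Icc 1 n
  memR : ∀ ⦃x y⦄, R x y → y ∈ Set.Icc 1 n
  func : ∀ ⦃x y y'⦄, R x y → R x y' → y = y'
  inj : ∀ ⦃x x' y⦄, R x y → R x' y → x = x'

namespace PInj

variable {n : ℕ}

@[ext] theorem ext {a b : PInj n} (h : ∀ x y, a.R x y ↔ b.R x y) : a = b := by
  cases a; cases b
  simp only [mk.injEq]
  funext x y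
  exact propext (h x y)

instance : Mul (PInj n) :=
  ⟨fun a b =>
    { R := fun x z => ∃ y, a.R x y ∧ b.R y z
      memL := by rintro x z ⟨y, h1, _⟩; exact a.memL h1
      memR := by rintro x z ⟨y, _, h2⟩; exact b.memR h2
      func := by
        rintro x z z' ⟨y, h1, h2⟩ ⟨y', h1', h2'⟩
        obtain rfl := a.func h1 h1'
        exact b.func h2 h2'
      inj := by
        rintro x x' z ⟨y, h1, h2⟩ ⟨y', h1', h2'⟩
        obtain rfl := b.inj h2 h2'
        exact a.inj h1 h1' }⟩

instance : One (PInj n) :=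
  ⟨{ R := fun x y => x ∈ Set.Icc 1 n ∧ y = x
     memL := by rintro x y ⟨h, rfl⟩; exact h
     memR := by rintro x y ⟨h, rfl⟩; exact h
     func := by rintro x y y' ⟨_, rfl⟩ ⟨_, rfl⟩; rfl
     inj := by rintro x x' y ⟨_, rfl⟩ ⟨_, h⟩; exact h }⟩

instance : Monoid (PInj n) where
  mul_assoc a b c := by
    ext x y
    constructor
    · rintro ⟨z, ⟨w, h1, h2⟩, h3⟩; exact ⟨w, h1, z, h2, h3⟩
    · rintro ⟨w, h1, z, h2, h3⟩; exact ⟨z, ⟨w, h1, h2⟩, h3⟩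
  one_mul a := by
    ext x y
    constructor
    · rintro ⟨z, ⟨_, rfl⟩, h⟩; exact h
    · intro h; exact ⟨x, ⟨a.memL h, rfl⟩, h⟩
  mul_one a := by
    ext x y
    constructor
    · rintro ⟨z, h, _, rfl⟩; exact h
    · intro h; exact ⟨y, h, a.memR h, rfl⟩

/-- The inverse of a partial injection. -/
def inv (a : PInj n) : PInj n where
  R := fun x y => a.R y x
  memL := by intro x y h; exact a.memR h
  memR := by intro x y h; exact a.memL h
  func := by intro x y y' h h'; exact a.inj h h'
  inj := by intro x x' y h h'; exact a.func h h'

/-- The domain of a partial injection. -/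
def dom (a : PInj n) : Set ℕ := {x | ∃ y, a.R x y}

/-- The image of a partial injection. -/
def im (a : PInj n) : Set ℕ := {y | ∃ x, a.R x y}

end PInj

/-- The strict fence (zig-zag) order on `{1,...,n}`: `x ≺ y` iff `x` is odd and
`x`, `y` are adjacent.  It is generated by `i ≺ i+1` for odd `i` and `i+1 ≺ i`
for even `i`. -/
def FenceLt (x y : ℕ) : Prop := Odd x ∧ (y = x + 1 ∨ x = y + 1)

/-- Membership in `IOF_n^par`: order-preserving, parity-preserving,
fence-preserving, and with fence-preserving inverse. -/
def IsIOF {n : ℕ} (a : PInj n) : Prop :=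
  (∀ ⦃x y x' y'⦄, a.R x y → a.R x' y' → x < x' → y < y') ∧
  (∀ ⦃x y⦄, a.R x y → x % 2 = y % 2) ∧
  (∀ ⦃x y x' y'⦄, a.R x y → a.R x' y' → FenceLt x x' → FenceLt y y') ∧
  (∀ ⦃x y x' y'⦄, a.R x y → a.R x' y' → FenceLt y y' → FenceLt x x')

/-- A partial identity: every point of the domain is fixed. -/
def IsPartialId {n : ℕ} (a : PInj n) : Prop := ∀ ⦃x y⦄, a.R x y → y = x

/-- The partial identity `v_i` with domain `{1,...,n} \ {i}`. -/
def vMap (n i : ℕ) : PInj n where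
  R := fun x y => x ∈ Set.Icc 1 n ∧ x ≠ i ∧ y = x
  memL := by rintro x y ⟨h, _, rfl⟩; exact h
  memR := by rintro x y ⟨h, _, rfl⟩; exact h
  func := by rintro x y y' ⟨_, _, rfl⟩ ⟨_, _, rfl⟩; rfl
  inj := by rintro x x' y ⟨_, _, rfl⟩ ⟨_, _, h⟩; exact h

/-- The map `u_i` with domain `{1,...,i} ∪ {i+4,...,n}`, sending `ρ ↦ ρ+2` for
`ρ ≤ i` and `ρ ↦ ρ` for `ρ ≥ i+4`. -/
def uMap (n i : ℕ) : PInj n where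
  R := fun x y => x ∈ Set.Icc 1 n ∧ y ∈ Set.Icc 1 n ∧
        ((x ≤ i ∧ y = x + 2) ∨ (i + 4 ≤ x ∧ y = x))
  memL := by rintro x y ⟨h, _, _⟩; exact h
  memR := by rintro x y ⟨_, h, _⟩; exact h
  func := by
    rintro x y y' ⟨_, _, (⟨hx, rfl⟩ | ⟨hx, rfl⟩)⟩ ⟨_, _, (⟨hx', rfl⟩ | ⟨hx', rfl⟩)⟩ <;> omega
  inj := by
    rintro x x' y ⟨_, _, (⟨hx, rfl⟩ | ⟨hx, rfl⟩)⟩ ⟨_, _, (⟨hx', h'⟩ | ⟨hx', h'⟩)⟩ <;> omega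

/-- The set `J_i = {1,...,i} ∪ {i+4,...,n}`. -/
def Jset (n i : ℕ) : Set ℕ := {x | (1 ≤ x ∧ x ≤ i) ∨ (i + 4 ≤ x ∧ x ≤ n)}

/-- `G` is a generating set of the monoid `IOF_n^par`: it consists of elements of
`IOF_n^par` and every element of `IOF_n^par` is a finite product of elements of `G`. -/
def Generates (n : ℕ) (G : Set (PInj n)) : Prop :=
  (∀ g ∈ G, IsIOF g) ∧
  ∀ a : PInj n, IsIOF a →
    ∃ l : List (PInj n), (∀ b ∈ l, b ∈ G) ∧ l.prod = a

/-- characterization of membership in `IOF_n^par` via conditions (i)-(iv). -/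
theorem stmt0 (n p : ℕ) (hp : 0 < p) (a : PInj n)
    (d m : Fin p → ℕ) (hd : StrictMono d)
    (hdom : ∀ x, (∃ y, a.R x y) ↔ ∃ k, d k = x)
    (hm : ∀ k, a.R (d k) (m k)) :
    IsIOF a ↔
      (StrictMono m ∧
       d ⟨0, hp⟩ % 2 = m ⟨0, hp⟩ % 2 ∧
       (∀ k : Fin p, ∀ h : k.val + 1 < p,
          (d ⟨k.val + 1, h⟩ - d k = 1 ↔ m ⟨k.val + 1, h⟩ - m k = 1)) ∧
       (∀ k : Fin p, ∀ h : k.val + 1 < p,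
          (Even (d ⟨k.val + 1, h⟩ - d k) ↔ Even (m ⟨k.val + 1, h⟩ - m k)))) := by
  have key : ∀ x y, a.R x y → ∃ k, d k = x ∧ m k = y := by
    intro x y h
    obtain ⟨k, hk⟩ := (hdom x).1 ⟨y, h⟩
    have hmk := hm k
    rw [hk] at hmk
    exact ⟨k, hk, a.func hmk h⟩
  have consec : ∀ (f : Fin p → ℕ), StrictMono f → ∀ k k' : Fin p,
      f k' = f k + 1 → k'.val = k.val + 1 := by
    intro f hf k k' hkk
    have hlt : k < k' := hf.lt_iff_lt.mp (by omega)
    have hvlt : k.val < k'.val := hlt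
    have hps : k.val + 1 < p := by have := k'.isLt; omega
    have h2 : (⟨k.val + 1, hps⟩ : Fin p) ≤ k' := by
      simp only [Fin.le_def]; omega
    have h3 := hf.monotone h2
    have h4 := hf (show k < ⟨k.val + 1, hps⟩ from by simp [Fin.lt_def])
    have h5 : f ⟨k.val + 1, hps⟩ = f k' := by omega
    have h6 := hf.injective h5
    have := congrArg Fin.val h6
    simpa using this.symm
  constructor
  · rintro ⟨hop, hpar, hf, hfi⟩
    have hmono : StrictMono m := fun k k' hkk' =>
      hop (hm k) (hm k') (hd hkk')
    refine ⟨hmono, hpar (hm ⟨0, hp⟩), ?_, ?_⟩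
    · intro k h
      have hdk : d k < d ⟨k.val + 1, h⟩ := hd (by simp [Fin.lt_def])
      have hmk : m k < m ⟨k.val + 1, h⟩ := hmono (by simp [Fin.lt_def])
      constructor
      · intro h1
        have hde : d ⟨k.val + 1, h⟩ = d k + 1 := by omega
        rcases Nat.even_or_odd (d k) with he | ho
        · have hodd : Odd (d ⟨k.val + 1, h⟩) := by
            rw [hde]; exact Even.add_one he
          have hF : FenceLt (d ⟨k.val + 1, h⟩) (d k) := ⟨hodd, Or.inr (by omega)⟩
          have := hf (hm ⟨k.val + 1, h⟩) (hm k) hF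
          rcases this with ⟨_, h2 | h2⟩ <;> omega
        · have hF : FenceLt (d k) (d ⟨k.val + 1, h⟩) := ⟨ho, Or.inl (by omega)⟩
          have := hf (hm k) (hm ⟨k.val + 1, h⟩) hF
          rcases this with ⟨_, h2 | h2⟩ <;> omega
      · intro h1
        have hme : m ⟨k.val + 1, h⟩ = m k + 1 := by omega
        rcases Nat.even_or_odd (m k) with he | ho
        · have hodd : Odd (m ⟨k.val + 1, h⟩) := by
            rw [hme]; exact Even.add_one he
          have hF : FenceLt (m ⟨k.val + 1, h⟩) (m k) := ⟨hodd, Or.inr (by omega)⟩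
          have := hfi (hm ⟨k.val + 1, h⟩) (hm k) hF
          rcases this with ⟨_, h2 | h2⟩ <;> omega
        · have hF : FenceLt (m k) (m ⟨k.val + 1, h⟩) := ⟨ho, Or.inl (by omega)⟩
          have := hfi (hm k) (hm ⟨k.val + 1, h⟩) hF
          rcases this with ⟨_, h2 | h2⟩ <;> omega
    · intro k h
      have hdk : d k < d ⟨k.val + 1, h⟩ := hd (by simp [Fin.lt_def])
      have hmk : m k < m ⟨k.val + 1, h⟩ := hmono (by simp [Fin.lt_def])
      have p1 := hpar (hm k)
      have p2 := hpar (hm ⟨k.val + 1, h⟩)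
      rw [Nat.even_iff, Nat.even_iff]
      omega
  · rintro ⟨hmono, hpar0, h3, h4⟩
    have par : ∀ k : Fin p, d k % 2 = m k % 2 := by
      intro k
      obtain ⟨kv, hk⟩ := k
      induction kv with
      | zero => exact hpar0
      | succ j ih =>
        have hj : j < p := Nat.lt_of_succ_lt hk
        have e4 : Even (d ⟨j + 1, hk⟩ - d ⟨j, hj⟩) ↔
            Even (m ⟨j + 1, hk⟩ - m ⟨j, hj⟩) := h4 ⟨j, hj⟩ hk
        have hdlt : d ⟨j, hj⟩ < d ⟨j + 1, hk⟩ := hd (by simp [Fin.lt_def])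
        have hmlt : m ⟨j, hj⟩ < m ⟨j + 1, hk⟩ := hmono (by simp [Fin.lt_def])
        have := ih hj
        rw [Nat.even_iff, Nat.even_iff] at e4
        omega
    refine ⟨?_, ?_, ?_, ?_⟩
    · intro x y x' y' h h' hxx'
      obtain ⟨k, rfl, rfl⟩ := key x y h
      obtain ⟨k', rfl, rfl⟩ := key x' y' h'
      exact hmono (hd.lt_iff_lt.mp hxx')
    · intro x y h
      obtain ⟨k, rfl, rfl⟩ := key x y h
      exact par k
    · intro x y x' y' h h' hfl
      obtain ⟨k, rfl, rfl⟩ := key x y h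
      obtain ⟨k', rfl, rfl⟩ := key x' y' h'
      obtain ⟨hodd, hadj⟩ := hfl
      rw [Nat.odd_iff] at hodd
      have pk := par k
      have pk' := par k'
      rcases hadj with hadj | hadj
      · have hv := consec d hd k k' (by omega)
        have hps : k.val + 1 < p := by rw [← hv]; exact k'.isLt
        have hk' : k' = ⟨k.val + 1, hps⟩ := Fin.ext hv
        subst hk'
        have e3 := (h3 k hps).1 (by omega)
        have hmlt : m k < m ⟨k.val + 1, hps⟩ := hmono (by simp [Fin.lt_def])
        exact ⟨Nat.odd_iff.mpr (by omega), Or.inl (by omega)⟩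
      · have hv := consec d hd k' k (by omega)
        have hps : k'.val + 1 < p := by rw [← hv]; exact k.isLt
        have hk : k = ⟨k'.val + 1, hps⟩ := Fin.ext hv
        subst hk
        have e3 := (h3 k' hps).1 (by omega)
        have hdlt : d k' < d ⟨k'.val + 1, hps⟩ := hd (by simp [Fin.lt_def])
        have hmlt : m k' < m ⟨k'.val + 1, hps⟩ := hmono (by simp [Fin.lt_def])
        exact ⟨Nat.odd_iff.mpr (by omega), Or.inr (by omega)⟩
    · intro x y x' y' h h' hfl
      obtain ⟨k, rfl, rfl⟩ := key x y h
      obtain ⟨k', rfl, rfl⟩ := key x' y' h'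
      obtain ⟨hodd, hadj⟩ := hfl
      rw [Nat.odd_iff] at hodd
      have pk := par k
      have pk' := par k'
      rcases hadj with hadj | hadj
      · have hv := consec m hmono k k' (by omega)
        have hps : k.val + 1 < p := by rw [← hv]; exact k'.isLt
        have hk' : k' = ⟨k.val + 1, hps⟩ := Fin.ext hv
        subst hk'
        have e3 := (h3 k hps).2 (by omega)
        have hdlt : d k < d ⟨k.val + 1, hps⟩ := hd (by simp [Fin.lt_def])
        exact ⟨Nat.odd_iff.mpr (by omega), Or.inl (by omega)⟩
      · have hv := consec m hmono k' k (by omega)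
        have hps : k'.val + 1 < p := by rw [← hv]; exact k.isLt
        have hk : k = ⟨k'.val + 1, hps⟩ := Fin.ext hv
        subst hk
        have e3 := (h3 k' hps).2 (by omega)
        have hdlt : d k' < d ⟨k'.val + 1, hps⟩ := hd (by simp [Fin.lt_def])
        have hmlt : m k' < m ⟨k'.val + 1, hps⟩ := hmono (by simp [Fin.lt_def])
        exact ⟨Nat.odd_iff.mpr (by omega), Or.inr (by omega)⟩
end

section
/- The monoid IOF_1^par has exactly 2 elements, IOF_2^par has exactly 4 elements, and IOF_3^par has exactly 10 elements. -/
/-- Encoding of a partial injection as a function `Fin n → Fin (n+1)`,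
with `0` meaning "undefined" and `f i = y` meaning `i + 1 ↦ y`. -/
def GoodF {n : ℕ} (f : Fin n → Fin (n+1)) : Prop :=
  (∀ i j : Fin n, f i ≠ 0 → f i = f j → i = j) ∧
  (∀ i j : Fin n, f i ≠ 0 → f j ≠ 0 → i < j → (f i : ℕ) < (f j : ℕ)) ∧
  (∀ i : Fin n, f i ≠ 0 → ((i : ℕ)+1) % 2 = ((f i : ℕ)) % 2) ∧
  (∀ i j : Fin n, f i ≠ 0 → f j ≠ 0 →
    (FenceLt ((i:ℕ)+1) ((j:ℕ)+1) ↔ FenceLt ((f i : ℕ)) ((f j : ℕ))))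

instance {n : ℕ} : DecidablePred (GoodF (n := n)) := by
  intro f; unfold GoodF FenceLt; infer_instance

lemma fin_ne_zero_iff {n : ℕ} (y : Fin (n+1)) : y ≠ 0 ↔ 1 ≤ (y : ℕ) := by
  rw [Ne, Fin.ext_iff, Fin.val_zero]; omega

/-- Decode an encoded function into a `PInj`. -/
def toP {n : ℕ} (f : Fin n → Fin (n+1)) (hf : GoodF f) : PInj n where
  R := fun x y => ∃ h : 1 ≤ x ∧ x ≤ n, 1 ≤ y ∧ (f ⟨x - 1, by omega⟩ : ℕ) = y
  memL := by rintro x y ⟨h, _, _⟩; exact ⟨h.1, h.2⟩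
  memR := by
    rintro x y ⟨h, hy, e⟩
    have := (f ⟨x - 1, by omega⟩).isLt
    exact ⟨hy, by omega⟩
  func := by rintro x y y' ⟨h, hy, e⟩ ⟨h', hy', e'⟩; omega
  inj := by
    rintro x x' y ⟨h, hy, e⟩ ⟨h', hy', e'⟩
    have hne : f ⟨x - 1, by omega⟩ ≠ 0 := by rw [fin_ne_zero_iff]; omega
    have := hf.1 ⟨x - 1, by omega⟩ ⟨x' - 1, by omega⟩ hne (Fin.ext (by omega))
    have := Fin.mk.injEq (x-1) _ (x'-1) _ ▸ this
    omega

lemma toP_isIOF {n : ℕ} (f : Fin n → Fin (n+1)) (hf : GoodF f) : IsIOF (toP f hf) := by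
  obtain ⟨h1, h2, h3, h4⟩ := hf
  refine ⟨?_, ?_, ?_, ?_⟩
  · rintro x y x' y' ⟨h, hy, e⟩ ⟨h', hy', e'⟩ hlt
    have := h2 ⟨x - 1, by omega⟩ ⟨x' - 1, by omega⟩
      (by rw [fin_ne_zero_iff]; omega) (by rw [fin_ne_zero_iff]; omega)
      (by simp only [Fin.mk_lt_mk]; omega)
    omega
  · rintro x y ⟨h, hy, e⟩
    have := h3 ⟨x - 1, by omega⟩ (by rw [fin_ne_zero_iff]; omega)
    simp only at this
    omega
  · rintro x y x' y' ⟨h, hy, e⟩ ⟨h', hy', e'⟩ hfl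
    have := (h4 ⟨x - 1, by omega⟩ ⟨x' - 1, by omega⟩
      (by rw [fin_ne_zero_iff]; omega) (by rw [fin_ne_zero_iff]; omega)).mp
    simp only at this
    rw [e, e'] at this
    exact this (by rwa [show x - 1 + 1 = x by omega, show x' - 1 + 1 = x' by omega])
  · rintro x y x' y' ⟨h, hy, e⟩ ⟨h', hy', e'⟩ hfl
    have := (h4 ⟨x - 1, by omega⟩ ⟨x' - 1, by omega⟩
      (by rw [fin_ne_zero_iff]; omega) (by rw [fin_ne_zero_iff]; omega)).mpr
    simp only at this
    rw [e, e', show x - 1 + 1 = x by omega, show x' - 1 + 1 = x' by omega] at this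
    exact this hfl

lemma toP_injective {n : ℕ} (f g : Fin n → Fin (n+1)) (hf : GoodF f) (hg : GoodF g)
    (h : toP f hf = toP g hg) : f = g := by
  have key : ∀ x y, (toP f hf).R x y ↔ (toP g hg).R x y := fun x y => by rw [h]
  funext i
  have hidx : ∀ (f' : Fin n → Fin (n+1)),
      f' ⟨(i : ℕ) + 1 - 1, by omega⟩ = f' i := by
    intro f'; congr 1
  have hR : ∀ (f' : Fin n → Fin (n+1)) (hf' : GoodF f'), f' i ≠ 0 →
      (toP f' hf').R ((i : ℕ) + 1) (f' i) := by
    intro f' hf' hne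
    exact ⟨⟨by omega, by omega⟩, (fin_ne_zero_iff _).mp hne, by rw [hidx f']⟩
  by_cases hfi : f i = 0
  · by_cases hgi : g i = 0
    · rw [hfi, hgi]
    · obtain ⟨_, hy, e⟩ := (key _ _).mpr (hR g hg hgi)
      rw [hidx f, hfi] at e
      simp only [Fin.val_zero] at e
      have := (fin_ne_zero_iff _).mp hgi
      omega
  · obtain ⟨_, hy, e⟩ := (key _ _).mp (hR f hf hfi)
    rw [hidx g] at e
    exact Fin.ext e.symm

lemma toP_surjective {n : ℕ} (a : PInj n) (ha : IsIOF a) :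
    ∃ (f : Fin n → Fin (n+1)) (hf : GoodF f), toP f hf = a := by
  classical
  set f : Fin n → Fin (n+1) := fun i =>
    if h : ∃ y, a.R ((i : ℕ) + 1) y then ⟨h.choose, by
      have := Set.mem_Icc.mp (a.memR h.choose_spec); omega⟩ else 0 with hfdef
  have spec : ∀ i : Fin n, (f i ≠ 0 → a.R ((i : ℕ) + 1) (f i)) ∧
      (∀ y, a.R ((i : ℕ) + 1) y → (f i : ℕ) = y) := by
    intro i
    by_cases h : ∃ y, a.R ((i : ℕ) + 1) y
    · have hfi : f i = ⟨h.choose, by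
          have := Set.mem_Icc.mp (a.memR h.choose_spec); omega⟩ := by
        rw [hfdef]; simp [h]
      constructor
      · intro _; rw [hfi]; exact h.choose_spec
      · intro y hy; rw [hfi]; exact a.func h.choose_spec hy
    · have hfi : f i = 0 := by rw [hfdef]; simp [h]
      exact ⟨fun hne => absurd hfi hne, fun y hy => absurd ⟨y, hy⟩ h⟩
  obtain ⟨ho, hp, hfl, hflr⟩ := ha
  have hne : ∀ i : Fin n, f i ≠ 0 → a.R ((i : ℕ) + 1) (f i) := fun i => (spec i).1
  have hgood : GoodF f := by
    refine ⟨?_, ?_, ?_, ?_⟩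
    · intro i j hi hij
      have h1 := hne i hi
      have h2 := hne j (hij ▸ hi)
      rw [hij] at h1
      have := a.inj h1 h2
      exact Fin.ext (by omega)
    · intro i j hi hj hij
      exact ho (hne i hi) (hne j hj) (by omega)
    · intro i hi
      exact hp (hne i hi)
    · intro i j hi hj
      exact ⟨fun h => hfl (hne i hi) (hne j hj) h, fun h => hflr (hne i hi) (hne j hj) h⟩
  refine ⟨f, hgood, ?_⟩
  apply PInj.ext
  intro x y
  constructor
  · rintro ⟨h, hy, e⟩
    have hne' : f ⟨x - 1, by omega⟩ ≠ 0 := by rw [fin_ne_zero_iff]; omega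
    have h2 := hne _ hne'
    have hval : ((⟨x - 1, by omega⟩ : Fin n) : ℕ) + 1 = x := by simp only; omega
    rw [hval, e] at h2
    exact h2
  · intro hxy
    have hx := Set.mem_Icc.mp (a.memL hxy)
    have hy := Set.mem_Icc.mp (a.memR hxy)
    refine ⟨⟨hx.1, hx.2⟩, hy.1, ?_⟩
    have h2 := (spec ⟨x - 1, by omega⟩).2 y
    have hval : ((⟨x - 1, by omega⟩ : Fin n) : ℕ) + 1 = x := by simp only; omega
    rw [hval] at h2
    exact h2 hxy

lemma card_eq (n : ℕ) :
    Nat.card {a : PInj n // IsIOF a} = Fintype.card {f : Fin n → Fin (n+1) // GoodF f} := by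
  rw [← Nat.card_eq_fintype_card]
  apply Nat.card_congr
  apply Equiv.symm
  exact Equiv.ofBijective (fun f => ⟨toP f.1 f.2, toP_isIOF f.1 f.2⟩)
    ⟨fun f g h => Subtype.ext (toP_injective f.1 g.1 f.2 g.2 (by
      simpa using congrArg Subtype.val h)),
     fun a => by
      obtain ⟨f, hf, he⟩ := toP_surjective a.1 a.2
      exact ⟨⟨f, hf⟩, Subtype.ext he⟩⟩

/-- `|IOF_1^par| = 2`, `|IOF_2^par| = 4`, `|IOF_3^par| = 10`. -/
theorem stmt5 :
    Nat.card {a : PInj 1 // IsIOF a} = 2 ∧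
    Nat.card {a : PInj 2 // IsIOF a} = 4 ∧
    Nat.card {a : PInj 3 // IsIOF a} = 10 := by
  refine ⟨?_, ?_, ?_⟩ <;> rw [card_eq] <;> decide
end

section
/- Let α ∈ IOF_n^par have domain of size n−1, i.e., domain {1,...,n} \ {i} for some i. Then α is the partial identity on {1,...,n} \ {i}. -/
/-- an element of `IOF_n^par` with domain `{1,...,n} \ {i}` is the
partial identity `v_i`. -/
theorem stmt7 (n i : ℕ) (hn : 4 ≤ n) (hi : i ∈ Set.Icc 1 n) (a : PInj n)
    (ha : IsIOF a) (hdom : PInj.dom a = Set.Icc 1 n \ {i}) :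
    a = vMap n i := by
  classical
  have hmono := ha.1
  have hpar := ha.2.1
  set g : ℕ → ℕ := fun x' => if h : ∃ y', a.R x' y' then h.choose else 0 with hg
  have hgR : ∀ x', 1 ≤ x' → x' ≤ n → x' ≠ i → a.R x' (g x') := by
    intro x' h1 h2 h3
    have hd : x' ∈ PInj.dom a := by
      rw [hdom]; exact ⟨Set.mem_Icc.mpr ⟨h1, h2⟩, h3⟩
    obtain ⟨y', hy'⟩ := hd
    have he : ∃ y', a.R x' y' := ⟨y', hy'⟩
    simp only [hg, dif_pos he]
    exact he.choose_spec
  have key : ∀ ⦃x y⦄, a.R x y → y = x := by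
    intro x y hxy
    have hx := Set.mem_Icc.mp (a.memL hxy)
    have hy := Set.mem_Icc.mp (a.memR hxy)
    by_contra hne
    have hpar' := hpar hxy
    rcases Nat.lt_or_ge y x with hlt | hge
    · -- y < x, parity gives y + 2 ≤ x
      have hy2 : y + 2 ≤ x := by omega
      have hcard : ((Finset.Ico 1 x).erase i).card ≤ (Finset.Ico 1 y).card := by
        apply Finset.card_le_card_of_injOn g
        · intro x' hx'
          have hx'm := Finset.mem_erase.mp hx'
          have hx'i := Finset.mem_Ico.mp hx'm.2
          have hR : a.R x' (g x') := hgR x' hx'i.1 (by omega) hx'm.1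
          have h1 : g x' < y := hmono hR hxy hx'i.2
          have h2 := Set.mem_Icc.mp (a.memR hR)
          exact Finset.mem_Ico.mpr ⟨h2.1, h1⟩
        · intro x1 h1 x2 h2 heq
          have h1m := Finset.mem_erase.mp h1
          have h1i := Finset.mem_Ico.mp h1m.2
          have h2m := Finset.mem_erase.mp h2
          have h2i := Finset.mem_Ico.mp h2m.2
          have hR1 : a.R x1 (g x1) := hgR x1 h1i.1 (by omega) h1m.1
          have hR2 : a.R x2 (g x2) := hgR x2 h2i.1 (by omega) h2m.1
          rw [heq] at hR1
          exact a.inj hR1 hR2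
      have c1 : (Finset.Ico 1 x).card = x - 1 := by simp
      have c2 : (Finset.Ico 1 y).card = y - 1 := by simp
      have c3 : (Finset.Ico 1 x).card - 1 ≤ ((Finset.Ico 1 x).erase i).card :=
        Finset.pred_card_le_card_erase
      omega
    · -- x < y (since y ≠ x), parity gives x + 2 ≤ y
      have hy2 : x + 2 ≤ y := by omega
      have hcard : ((Finset.Ioc x n).erase i).card ≤ (Finset.Ioc y n).card := by
        apply Finset.card_le_card_of_injOn g
        · intro x' hx'
          have hx'm := Finset.mem_erase.mp hx'
          have hx'i := Finset.mem_Ioc.mp hx'm.2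
          have hR : a.R x' (g x') := hgR x' (by omega) hx'i.2 hx'm.1
          have h1 : y < g x' := hmono hxy hR hx'i.1
          have h2 := Set.mem_Icc.mp (a.memR hR)
          exact Finset.mem_Ioc.mpr ⟨h1, h2.2⟩
        · intro x1 h1 x2 h2 heq
          have h1m := Finset.mem_erase.mp h1
          have h1i := Finset.mem_Ioc.mp h1m.2
          have h2m := Finset.mem_erase.mp h2
          have h2i := Finset.mem_Ioc.mp h2m.2
          have hR1 : a.R x1 (g x1) := hgR x1 (by omega) h1i.2 h1m.1
          have hR2 : a.R x2 (g x2) := hgR x2 (by omega) h2i.2 h2m.1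
          rw [heq] at hR1
          exact a.inj hR1 hR2
      have c1 : (Finset.Ioc x n).card = n - x := by simp
      have c2 : (Finset.Ioc y n).card = n - y := by simp
      have c3 : (Finset.Ioc x n).card - 1 ≤ ((Finset.Ioc x n).erase i).card :=
        Finset.pred_card_le_card_erase
      omega
  ext x y
  constructor
  · intro h
    have hx := a.memL h
    have hxi : x ≠ i := by
      have : x ∈ PInj.dom a := ⟨y, h⟩
      rw [hdom] at this
      exact this.2
    exact ⟨hx, hxi, key h⟩
  · rintro ⟨hx, hxi, rfl⟩
    have hd : y ∈ PInj.dom a := by rw [hdom]; exact ⟨hx, hxi⟩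
    obtain ⟨y', hy'⟩ := hd
    have := key hy'
    rwa [this] at hy'
end

section
/- Let α ∈ IOF_n^par have rank n−2 (i.e., its domain has exactly n−2 elements). Then either α is the partial identity on its domain, or α = u_{n−2} (the map with domain {1,...,n−2} sending ρ ↦ ρ+2), or α = x_{n−2} (the map with domain {3,...,n} sending ρ ↦ ρ−2). -/
section Stmt8Aux

variable {n : ℕ} {a : PInj n}

theorem aux_step_up (ha : IsIOF a) {d y y' : ℕ} (h : a.R d y) (h' : a.R (d+1) y') :
    y' = y + 1 := by
  have hlt : y < y' := ha.1 h h' (by omega)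
  rcases Nat.even_or_odd d with he | ho
  · have hf : FenceLt (d+1) d := ⟨he.add_one, Or.inr rfl⟩
    have h2 := (ha.2.2.1 h' h hf).2
    omega
  · have hf : FenceLt d (d+1) := ⟨ho, Or.inl rfl⟩
    have h2 := (ha.2.2.1 h h' hf).2
    omega

theorem aux_adj_inv (ha : IsIOF a) {d d' y : ℕ} (h : a.R d y) (h' : a.R d' (y+1)) :
    d' = d + 1 := by
  have hdd : d < d' := by
    rcases Nat.lt_trichotomy d d' with h1 | h1 | h1
    · exact h1
    · exact absurd (a.func (h1 ▸ h) h') (by omega)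
    · have := ha.1 h' h h1; omega
  rcases Nat.even_or_odd y with he | ho
  · have hf : FenceLt (y+1) y := ⟨he.add_one, Or.inr rfl⟩
    have h2 := (ha.2.2.2 h' h hf).2
    omega
  · have hf : FenceLt y (y+1) := ⟨ho, Or.inl rfl⟩
    have h2 := (ha.2.2.2 h h' hf).2
    omega

theorem aux_run (ha : IsIOF a) {l r y : ℕ} (h : a.R l y)
    (hd : ∀ k, l ≤ k → k ≤ r → ∃ z, a.R k z) :
    ∀ k, l ≤ k → k ≤ r → a.R k (y + (k - l)) := by
  intro k hk1 hk2
  induction k with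
  | zero =>
    have hl : l = 0 := by omega
    subst hl; simpa using h
  | succ m ih =>
    rcases Nat.lt_or_ge l (m+1) with hlt | hge
    · have hm := ih (by omega) (by omega)
      obtain ⟨z, hz⟩ := hd (m+1) (by omega) hk2
      have hs := aux_step_up ha hm hz
      have he : y + (m + 1 - l) = y + (m - l) + 1 := by omega
      rw [he, ← hs]; exact hz
    · have hl : l = m + 1 := by omega
      subst hl; simpa using h

theorem aux_id (ha : IsIOF a)
    (h : ∀ x, (∃ y, a.R x y) → ∃ l, l ≤ x ∧ a.R l l ∧ ∀ k, l ≤ k → k ≤ x → ∃ z, a.R k z) :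
    IsPartialId a := by
  intro x y hxy
  obtain ⟨l, hl1, hl2, hl3⟩ := h x ⟨y, hxy⟩
  have := a.func hxy (aux_run ha hl2 hl3 x hl1 le_rfl)
  omega

end Stmt8Aux

/-- an element of `IOF_n^par` of rank `n-2` is a partial identity, or
`u_{n-2}`, or `x_{n-2} = u_{n-2}⁻¹`. -/
theorem stmt8 (n : ℕ) (hn : 4 ≤ n) (a : PInj n) (ha : IsIOF a)
    (hrk : (PInj.dom a).ncard = n - 2) :
    IsPartialId a ∨ a = uMap n (n - 2) ∨ a = (uMap n (n - 2)).inv := by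
  classical
  have hsub : a.dom ⊆ Set.Icc 1 n := fun x ⟨y, hy⟩ => a.memL hy
  have hfin : a.dom.Finite := (Set.finite_Icc 1 n).subset hsub
  have hIcc : (Set.Icc 1 n).ncard = n := by
    simp [Set.ncard_eq_toFinset_card', Nat.card_Icc]
  have hdiff : (Set.Icc 1 n \ a.dom).ncard = 2 := by
    rw [Set.ncard_diff hsub hfin, hIcc, hrk]; omega
  obtain ⟨p0, q0, hpq0, hS0⟩ := Set.ncard_eq_two.mp hdiff
  have hS' : ∃ p q, p < q ∧ Set.Icc 1 n \ a.dom = {p, q} := by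
    rcases Nat.lt_or_ge p0 q0 with h1 | h1
    · exact ⟨p0, q0, h1, hS0⟩
    · exact ⟨q0, p0, by omega, by rw [hS0, Set.pair_comm]⟩
  obtain ⟨p, q, hlt, hS⟩ := hS'
  have hpmem : p ∈ Set.Icc 1 n \ a.dom := by rw [hS]; exact Set.mem_insert _ _
  have hqmem : q ∈ Set.Icc 1 n \ a.dom := by
    rw [hS]; exact Set.mem_insert_of_mem _ rfl
  have hp1 : 1 ≤ p := hpmem.1.1
  have hqn : q ≤ n := hqmem.1.2
  have hdom : ∀ x, (∃ y, a.R x y) ↔ (1 ≤ x ∧ x ≤ n ∧ x ≠ p ∧ x ≠ q) := by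
    intro x
    constructor
    · rintro ⟨y, hy⟩
      have hx := a.memR hy
      have hx1 := a.memL hy
      have hxd : x ∈ a.dom := ⟨y, hy⟩
      have h1 : x ∉ ({p, q} : Set ℕ) := by rw [← hS]; exact fun hc => hc.2 hxd
      simp only [Set.mem_insert_iff, Set.mem_singleton_iff] at h1
      exact ⟨hx1.1, hx1.2, fun h => h1 (Or.inl h), fun h => h1 (Or.inr h)⟩
    · rintro ⟨h1, h2, h3, h4⟩
      by_contra hc
      have hmem : x ∈ Set.Icc 1 n \ a.dom := ⟨Set.mem_Icc.mpr ⟨h1, h2⟩, fun hd => hc hd⟩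
      rw [hS] at hmem
      simp only [Set.mem_insert_iff, Set.mem_singleton_iff] at hmem
      tauto
  by_cases hu : p = n - 1 ∧ q = n
  · -- domain is [1, n-2] : identity or uMap
    obtain ⟨hp', hq'⟩ := hu
    have hd : ∀ k, 1 ≤ k → k ≤ n - 2 → ∃ z, a.R k z := fun k hk1 hk2 =>
      (hdom k).mpr ⟨hk1, by omega, by omega, by omega⟩
    obtain ⟨c, hc⟩ := hd 1 le_rfl (by omega)
    have hcp : 1 % 2 = c % 2 := ha.2.1 hc
    have hc1 : 1 ≤ c := (a.memR hc).1
    have hrun := aux_run ha hc hd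
    have hlast := hrun (n-2) (by omega) le_rfl
    have hcn : c + (n - 2 - 1) ≤ n := (a.memR hlast).2
    rcases (by omega : c = 1 ∨ c = 3) with rfl | rfl
    · left
      intro x y hxy
      have hb := (hdom x).mp ⟨y, hxy⟩
      have := a.func hxy (hrun x hb.1 (by omega))
      omega
    · right; left
      ext x y
      constructor
      · intro hxy
        have hb := (hdom x).mp ⟨y, hxy⟩
        have hy := a.memR hxy
        have heq := a.func hxy (hrun x hb.1 (by omega))
        exact ⟨Set.mem_Icc.mpr ⟨hb.1, hb.2.1⟩, hy, Or.inl ⟨by omega, by omega⟩⟩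
      · rintro ⟨hx, hy, hor⟩
        rw [Set.mem_Icc] at hx hy
        rcases hor with ⟨hx2, rfl⟩ | ⟨hx2, rfl⟩
        · have hh := hrun x hx.1 (by omega)
          have heq : x + 2 = 3 + (x - 1) := by omega
          rw [heq]; exact hh
        · omega
  · by_cases hxc : p = 1 ∧ q = 2
    · -- domain is [3, n] : identity or inverse of uMap
      obtain ⟨rfl, rfl⟩ := hxc
      have hd : ∀ k, 3 ≤ k → k ≤ n → ∃ z, a.R k z := fun k hk1 hk2 =>
        (hdom k).mpr ⟨by omega, hk2, by omega, by omega⟩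
      obtain ⟨c, hc⟩ := hd 3 le_rfl (by omega)
      have hcp : 3 % 2 = c % 2 := ha.2.1 hc
      have hc1 : 1 ≤ c := (a.memR hc).1
      have hrun := aux_run ha hc hd
      have hlast := hrun n (by omega) le_rfl
      have hcn : c + (n - 3) ≤ n := (a.memR hlast).2
      rcases (by omega : c = 3 ∨ c = 1) with rfl | rfl
      · left
        intro x y hxy
        have hb := (hdom x).mp ⟨y, hxy⟩
        have := a.func hxy (hrun x (by omega) hb.2.1)
        omega
      · right; right
        ext x y
        constructor
        · intro hxy
          have hb := (hdom x).mp ⟨y, hxy⟩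
          have hy := a.memR hxy
          have heq := a.func hxy (hrun x (by omega) hb.2.1)
          refine ⟨hy, Set.mem_Icc.mpr ⟨hb.1, hb.2.1⟩, Or.inl ⟨by omega, by omega⟩⟩
        · rintro ⟨hy, hx, hor⟩
          rw [Set.mem_Icc] at hx hy
          rcases hor with ⟨hy2, rfl⟩ | ⟨hy2, hxy⟩
          · have hh := hrun (y + 2) (by omega) (by omega)
            have heq : 1 + (y + 2 - 3) = y := by omega
            rwa [heq] at hh
          · omega
    · -- identity case
      left
      have hnu : ¬(p = n - 1 ∧ q = n) := hu
      have hnx : ¬(p = 1 ∧ q = 2) := hxc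
      -- case split on the shape of the domain
      by_cases hA : 2 ≤ p
      · by_cases hB : p + 2 ≤ q
        · -- A and B nonempty
          have hdA : ∀ k, 1 ≤ k → k ≤ p - 1 → ∃ z, a.R k z := fun k hk1 hk2 =>
            (hdom k).mpr ⟨hk1, by omega, by omega, by omega⟩
          have hdB : ∀ k, p + 1 ≤ k → k ≤ q - 1 → ∃ z, a.R k z := fun k hk1 hk2 =>
            (hdom k).mpr ⟨by omega, by omega, by omega, by omega⟩
          obtain ⟨y1, h1⟩ := hdA 1 le_rfl (by omega)
          obtain ⟨yB, hBv⟩ := hdB (p+1) le_rfl (by omega)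
          have hp1p : 1 % 2 = y1 % 2 := ha.2.1 h1
          have hy11 : 1 ≤ y1 := (a.memR h1).1
          have hBp : (p+1) % 2 = yB % 2 := ha.2.1 hBv
          have hrunA := aux_run ha h1 hdA
          have hrunB := aux_run ha hBv hdB
          have hAend := hrunA (p-1) (by omega) le_rfl
          have hord1 : y1 + (p - 1 - 1) < yB := ha.1 hAend hBv (by omega)
          by_cases hC : q ≤ n - 1
          · -- C nonempty too
            have hdC : ∀ k, q + 1 ≤ k → k ≤ n → ∃ z, a.R k z := fun k hk1 hk2 =>
              (hdom k).mpr ⟨by omega, hk2, by omega, by omega⟩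
            obtain ⟨yC, hCv⟩ := hdC (q+1) le_rfl (by omega)
            have hCp : (q+1) % 2 = yC % 2 := ha.2.1 hCv
            have hrunC := aux_run ha hCv hdC
            have hBend := hrunB (q-1) (by omega) le_rfl
            have hord2 : yB + (q - 1 - (p+1)) < yC := ha.1 hBend hCv (by omega)
            have hClast := hrunC n (by omega) le_rfl
            have hCn : yC + (n - (q+1)) ≤ n := (a.memR hClast).2
            have hy1e : y1 = 1 := by omega
            have hyBe : yB = p + 1 := by omega
            have hyCe : yC = q + 1 := by omega
            subst hy1e hyBe hyCe
            refine aux_id ha fun x hx => ?_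
            have hb := (hdom x).mp hx
            rcases (by omega : x ≤ p - 1 ∨ (p + 1 ≤ x ∧ x ≤ q - 1) ∨ q + 1 ≤ x) with
              h | h | h
            · exact ⟨1, by omega, h1, fun k hk1 hk2 => hdA k hk1 (by omega)⟩
            · exact ⟨p+1, by omega, hBv, fun k hk1 hk2 => hdB k hk1 (by omega)⟩
            · exact ⟨q+1, by omega, hCv, fun k hk1 hk2 => hdC k hk1 (by omega)⟩
          · -- C empty : q = n
            have hqe : q = n := by omega
            have hBend := hrunB (q-1) (by omega) le_rfl
            have hBn : yB + (q - 1 - (p+1)) ≤ n := (a.memR hBend).2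
            have hBlp : (q-1) % 2 = (yB + (q - 1 - (p+1))) % 2 := ha.2.1 hBend
            have hy1e : y1 = 1 := by omega
            have hyBe : yB = p + 1 := by omega
            subst hy1e hyBe
            refine aux_id ha fun x hx => ?_
            have hb := (hdom x).mp hx
            rcases (by omega : x ≤ p - 1 ∨ (p + 1 ≤ x ∧ x ≤ q - 1)) with h | h
            · exact ⟨1, by omega, h1, fun k hk1 hk2 => hdA k hk1 (by omega)⟩
            · exact ⟨p+1, by omega, hBv, fun k hk1 hk2 => hdB k hk1 (by omega)⟩
        · -- B empty : q = p + 1 ; then C nonempty (else u-case)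
          have hqe : q = p + 1 := by omega
          have hC : q ≤ n - 1 := by omega
          have hdA : ∀ k, 1 ≤ k → k ≤ p - 1 → ∃ z, a.R k z := fun k hk1 hk2 =>
            (hdom k).mpr ⟨hk1, by omega, by omega, by omega⟩
          have hdC : ∀ k, q + 1 ≤ k → k ≤ n → ∃ z, a.R k z := fun k hk1 hk2 =>
            (hdom k).mpr ⟨by omega, hk2, by omega, by omega⟩
          obtain ⟨y1, h1⟩ := hdA 1 le_rfl (by omega)
          obtain ⟨yC, hCv⟩ := hdC (q+1) le_rfl (by omega)
          have hp1p : 1 % 2 = y1 % 2 := ha.2.1 h1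
          have hy11 : 1 ≤ y1 := (a.memR h1).1
          have hCp : (q+1) % 2 = yC % 2 := ha.2.1 hCv
          have hrunA := aux_run ha h1 hdA
          have hrunC := aux_run ha hCv hdC
          have hAend := hrunA (p-1) (by omega) le_rfl
          have hord1 : y1 + (p - 1 - 1) < yC := ha.1 hAend hCv (by omega)
          have hClast := hrunC n (by omega) le_rfl
          have hCn : yC + (n - (q+1)) ≤ n := (a.memR hClast).2
          have hne : yC ≠ y1 + (p - 1 - 1) + 1 := by
            intro he
            have := aux_adj_inv ha hAend (he ▸ hCv)
            omega
          have hy1e : y1 = 1 := by omega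
          have hyCe : yC = q + 1 := by omega
          subst hy1e hyCe
          refine aux_id ha fun x hx => ?_
          have hb := (hdom x).mp hx
          rcases (by omega : x ≤ p - 1 ∨ q + 1 ≤ x) with h | h
          · exact ⟨1, by omega, h1, fun k hk1 hk2 => hdA k hk1 (by omega)⟩
          · exact ⟨q+1, by omega, hCv, fun k hk1 hk2 => hdC k hk1 (by omega)⟩
      · -- A empty : p = 1 ; then q ≥ 3 (else x-case)
        have hpe : p = 1 := by omega
        have hq3 : 3 ≤ q := by omega
        have hdB : ∀ k, 2 ≤ k → k ≤ q - 1 → ∃ z, a.R k z := fun k hk1 hk2 =>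
          (hdom k).mpr ⟨by omega, by omega, by omega, by omega⟩
        obtain ⟨yB, hBv⟩ := hdB 2 le_rfl (by omega)
        have hBp : 2 % 2 = yB % 2 := ha.2.1 hBv
        have hyB1 : 1 ≤ yB := (a.memR hBv).1
        have hrunB := aux_run ha hBv hdB
        by_cases hC : q ≤ n - 1
        · have hdC : ∀ k, q + 1 ≤ k → k ≤ n → ∃ z, a.R k z := fun k hk1 hk2 =>
            (hdom k).mpr ⟨by omega, hk2, by omega, by omega⟩
          obtain ⟨yC, hCv⟩ := hdC (q+1) le_rfl (by omega)
          have hCp : (q+1) % 2 = yC % 2 := ha.2.1 hCv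
          have hrunC := aux_run ha hCv hdC
          have hBend := hrunB (q-1) (by omega) le_rfl
          have hord2 : yB + (q - 1 - 2) < yC := ha.1 hBend hCv (by omega)
          have hClast := hrunC n (by omega) le_rfl
          have hCn : yC + (n - (q+1)) ≤ n := (a.memR hClast).2
          have hyBe : yB = 2 := by omega
          have hyCe : yC = q + 1 := by omega
          subst hyBe hyCe
          refine aux_id ha fun x hx => ?_
          have hb := (hdom x).mp hx
          rcases (by omega : (2 ≤ x ∧ x ≤ q - 1) ∨ q + 1 ≤ x) with h | h
          · exact ⟨2, by omega, hBv, fun k hk1 hk2 => hdB k hk1 (by omega)⟩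
          · exact ⟨q+1, by omega, hCv, fun k hk1 hk2 => hdC k hk1 (by omega)⟩
        · -- C empty : q = n, domain = [2, n-1]
          have hqe : q = n := by omega
          have hBend := hrunB (q-1) (by omega) le_rfl
          have hBn : yB + (q - 1 - 2) ≤ n := (a.memR hBend).2
          have hBlp : (q-1) % 2 = (yB + (q - 1 - 2)) % 2 := ha.2.1 hBend
          have hyBe : yB = 2 := by omega
          subst hyBe
          refine aux_id ha fun x hx => ?_
          have hb := (hdom x).mp hx
          exact ⟨2, by omega, hBv, fun k hk1 hk2 => hdB k hk1 (by omega)⟩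
end

section
/- Every generating set G of the monoid IOF_n^par (n ≥ 4) contains all n partial identities v_i with domain {1,...,n} \ {i}, i ∈ {1,...,n}. -/
lemma isIOF_inv {n : ℕ} {a : PInj n} (ha : IsIOF a) : IsIOF a.inv := by
  obtain ⟨h1, h2, h3, h4⟩ := ha
  refine ⟨?_, fun x y h => (h2 h).symm,
    fun x y x' y' h h' => h4 h h', fun x y x' y' h h' => h3 h h'⟩
  intro x y x' y' h h' hlt
  rcases lt_trichotomy y y' with hc | hc | hc
  · exact hc
  · subst hc; exact absurd (a.func h h') (by omega)
  · exact absurd (h1 h' h hc) (by omega)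

lemma upper_aux {n i : ℕ} {a : PInj n} (ha : IsIOF a)
    (hdom : ∀ x, 1 ≤ x → x ≤ n → x ≠ i → ∃ y, a.R x y) :
    ∀ k x y, n - x ≤ k → a.R x y → (i ≤ x → y ≤ x) ∧ (x < i → y ≤ x + 1) := by
  intro k
  induction k with
  | zero =>
    intro x y hk hxy
    obtain ⟨hx1, hx2⟩ := a.memL hxy
    obtain ⟨hy1, hy2⟩ := a.memR hxy
    constructor <;> intro <;> omega
  | succ k ih =>
    intro x y hk hxy
    obtain ⟨hx1, hx2⟩ := a.memL hxy
    obtain ⟨hy1, hy2⟩ := a.memR hxy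
    by_cases hxn : x = n
    · constructor <;> intro <;> omega
    by_cases h1 : x + 1 = i
    · by_cases h2 : x + 1 = n
      · constructor <;> intro <;> omega
      · obtain ⟨y2, hy2'⟩ := hdom (x + 2) (by omega) (by omega) (by omega)
        have hlt := ha.1 hxy hy2' (by omega)
        have := (ih (x + 2) y2 (by omega) hy2').1 (by omega)
        constructor <;> intro <;> omega
    · obtain ⟨y1, hy1'⟩ := hdom (x + 1) (by omega) (by omega) h1
      have hlt := ha.1 hxy hy1' (by omega)
      have h3 := ih (x + 1) y1 (by omega) hy1'
      constructor
      · intro hix; have := h3.1 (by omega); omega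
      · intro hxi
        rcases lt_or_ge (x + 1) i with h4 | h4
        · have := h3.2 h4; omega
        · have := h3.1 h4; omega

lemma lower_aux {n i : ℕ} {a : PInj n} (ha : IsIOF a)
    (hdom : ∀ x, 1 ≤ x → x ≤ n → x ≠ i → ∃ y, a.R x y) :
    ∀ x y, a.R x y → (x ≤ i → x ≤ y) ∧ (i < x → x - 1 ≤ y) := by
  intro x
  induction x using Nat.strong_induction_on with
  | _ x ih =>
  intro y hxy
  obtain ⟨hx1, hx2⟩ := a.memL hxy
  obtain ⟨hy1, hy2⟩ := a.memR hxy
  by_cases hx1' : x = 1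
  · constructor <;> intro <;> omega
  by_cases h1 : x - 1 = i
  · by_cases h2 : x = 2
    · constructor <;> intro <;> omega
    · obtain ⟨y2, hy2'⟩ := hdom (x - 2) (by omega) (by omega) (by omega)
      have hlt := ha.1 hy2' hxy (by omega)
      have := (ih (x - 2) (by omega) y2 hy2').1 (by omega)
      constructor <;> intro <;> omega
  · obtain ⟨y1, hy1'⟩ := hdom (x - 1) (by omega) (by omega) h1
    have hlt := ha.1 hy1' hxy (by omega)
    have h3 := ih (x - 1) (by omega) y1 hy1'
    constructor
    · intro hxi; have := h3.1 (by omega); omega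
    · intro hix
      rcases lt_or_ge i (x - 1) with h4 | h4
      · have := h3.2 h4; omega
      · have := h3.1 h4; omega

lemma rank_lemma {n i : ℕ} {a : PInj n} (ha : IsIOF a)
    (hdom : ∀ x, 1 ≤ x → x ≤ n → x ≠ i → ∃ y, a.R x y) : IsPartialId a := by
  intro x y hxy
  have hU := upper_aux ha hdom (n - x) x y le_rfl hxy
  have hL := lower_aux ha hdom x y hxy
  have hpar := ha.2.1 hxy
  omega

lemma rank_lemma_im {n i : ℕ} {a : PInj n} (ha : IsIOF a)
    (him : ∀ x, 1 ≤ x → x ≤ n → x ≠ i → ∃ z, a.R z x) : IsPartialId a := by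
  intro x y hxy
  have h : IsPartialId a.inv := rank_lemma (i := i) (isIOF_inv ha) him
  exact (h (x := y) (y := x) hxy).symm

lemma isIOF_one {n : ℕ} : IsIOF (1 : PInj n) := by
  refine ⟨?_, ?_, ?_, ?_⟩
  · rintro x y x' y' ⟨_, rfl⟩ ⟨_, rfl⟩ h; exact h
  · rintro x y ⟨_, rfl⟩; rfl
  · rintro x y x' y' ⟨_, rfl⟩ ⟨_, rfl⟩ h; exact h
  · rintro x y x' y' ⟨_, rfl⟩ ⟨_, rfl⟩ h; exact h

lemma isIOF_mul {n : ℕ} {a b : PInj n} (ha : IsIOF a) (hb : IsIOF b) :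
    IsIOF (a * b) := by
  obtain ⟨a1, a2, a3, a4⟩ := ha
  obtain ⟨b1, b2, b3, b4⟩ := hb
  refine ⟨?_, ?_, ?_, ?_⟩
  · rintro x y x' y' ⟨z, h1, h2⟩ ⟨z', h1', h2'⟩ h; exact b1 h2 h2' (a1 h1 h1' h)
  · rintro x y ⟨z, h1, h2⟩; exact (a2 h1).trans (b2 h2)
  · rintro x y x' y' ⟨z, h1, h2⟩ ⟨z', h1', h2'⟩ h; exact b3 h2 h2' (a3 h1 h1' h)
  · rintro x y x' y' ⟨z, h1, h2⟩ ⟨z', h1', h2'⟩ h; exact a4 h1 h1' (b4 h2 h2' h)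

lemma isIOF_prod {n : ℕ} : ∀ l : List (PInj n), (∀ b ∈ l, IsIOF b) → IsIOF l.prod
  | [], _ => by rw [List.prod_nil]; exact isIOF_one
  | g :: t, h => by
    rw [List.prod_cons]
    exact isIOF_mul (h g (.head _)) (isIOF_prod t fun b hb => h b (.tail _ hb))

lemma isIOF_vMap {n i : ℕ} : IsIOF (vMap n i) := by
  refine ⟨?_, ?_, ?_, ?_⟩
  · rintro x y x' y' ⟨_, _, rfl⟩ ⟨_, _, rfl⟩ h; exact h
  · rintro x y ⟨_, _, rfl⟩; rfl
  · rintro x y x' y' ⟨_, _, rfl⟩ ⟨_, _, rfl⟩ h; exact h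
  · rintro x y x' y' ⟨_, _, rfl⟩ ⟨_, _, rfl⟩ h; exact h

lemma main_aux {n : ℕ} : ∀ l : List (PInj n), (∀ b ∈ l, IsIOF b) →
    ∀ i, 1 ≤ i → i ≤ n → l.prod = vMap n i → vMap n i ∈ l := by
  intro l
  induction l with
  | nil =>
    intro _ i h1 h2 hprod
    exfalso
    have hii : (vMap n i).R i i := by
      rw [← hprod, List.prod_nil]; exact ⟨⟨h1, h2⟩, rfl⟩
    exact hii.2.1 rfl
  | cons g t ih =>
    intro hmem i h1 h2 hprod
    rw [List.prod_cons] at hprod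
    have hg : IsIOF g := hmem g (.head _)
    have hpt : IsIOF t.prod := isIOF_prod t fun b hb => hmem b (.tail _ hb)
    have hchain : ∀ x, 1 ≤ x → x ≤ n → x ≠ i → ∃ y, g.R x y ∧ t.prod.R y x := by
      intro x hx1 hx2 hxi
      have hx : (g * t.prod).R x x := by
        rw [hprod]; exact ⟨⟨hx1, hx2⟩, hxi, rfl⟩
      exact hx
    have hgid : IsPartialId g :=
      rank_lemma (i := i) hg fun x h1' h2' h3' =>
        (hchain x h1' h2' h3').imp fun y hy => hy.1
    have hpid : IsPartialId t.prod :=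
      rank_lemma_im (i := i) hpt fun x h1' h2' h3' => by
        obtain ⟨y, _, hy2⟩ := hchain x h1' h2' h3'
        exact ⟨y, hy2⟩
    have hgx : ∀ x, 1 ≤ x → x ≤ n → x ≠ i → g.R x x := by
      intro x ha hb hc
      obtain ⟨y, hy1, _⟩ := hchain x ha hb hc
      obtain rfl := hgid hy1
      exact hy1
    by_cases hgi : ∃ y, g.R i y
    · have hg1 : g = 1 := by
        ext x y
        constructor
        · intro h; exact ⟨g.memL h, hgid h⟩
        · rintro ⟨⟨ha1, ha2⟩, rfl⟩
          by_cases hxi : y = i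
          · subst hxi
            obtain ⟨z, hz⟩ := hgi
            obtain rfl := hgid hz
            exact hz
          · exact hgx y ha1 ha2 hxi
      rw [hg1, one_mul] at hprod
      exact List.mem_cons_of_mem _ (ih (fun b hb => hmem b (.tail _ hb)) i h1 h2 hprod)
    · have hgv : g = vMap n i := by
        ext x y
        constructor
        · intro h
          refine ⟨g.memL h, ?_, hgid h⟩
          rintro rfl; exact hgi ⟨y, h⟩
        · rintro ⟨⟨ha1, ha2⟩, hxi, rfl⟩
          exact hgx y ha1 ha2 hxi
      rw [← hgv]
      exact List.mem_cons_self

/-- every generating set of `IOF_n^par` contains all the partial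
identities `v_1, ..., v_n`. -/
theorem stmt10 (n : ℕ) (hn : 4 ≤ n) (G : Set (PInj n)) (hG : Generates n G) :
    ∀ i ∈ Set.Icc 1 n, vMap n i ∈ G := by
  intro i hi
  obtain ⟨hi1, hi2⟩ := hi
  obtain ⟨l, hl, hprod⟩ := hG.2 (vMap n i) isIOF_vMap
  exact hl _ (main_aux l (fun b hb => hG.1 b (hl b hb)) i hi1 hi2 hprod)
end
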